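/- For a flag triple (E, F, G) in an n-dimensional vector space V, the following are equivalent: (a) the sum E^(a) + F^(b) + G^(c) equals V and is direct whenever a + b + c = n; (b) dim(E^(a) + F^(b) + G^(c)) = min(a+b+c, n) for all 0 ≤ a, b, c ≤ n. -/

import Mathlib

open Module Submodule

lemma fin3_sup_ne {α : Type*} [CompleteLattice α] (A B C : α) :
    (⨆ j, ⨆ _ : j ≠ (0 : Fin 3), ![A, B, C] j) = B ⊔ C ∧
    (⨆ j, ⨆ _ : j ≠ (1 : Fin 3), ![A, B, C] j) = A ⊔ C ∧
    (⨆ j, ⨆ _ : j ≠ (2 : Fin 3), ![A, B, C] j) = A ⊔ B := by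
  refine ⟨le_antisymm ?_ ?_, le_antisymm ?_ ?_, le_antisymm ?_ ?_⟩
  · exact iSup_le fun j => iSup_le fun hj => by fin_cases j <;> simp_all
  · exact sup_le (le_iSup_of_le 1 (by simp)) (le_iSup_of_le 2 (by simp))
  · exact iSup_le fun j => iSup_le fun hj => by fin_cases j <;> simp_all
  · exact sup_le (le_iSup_of_le 0 (by simp)) (le_iSup_of_le 2 (by simp))
  · exact iSup_le fun j => iSup_le fun hj => by fin_cases j <;> simp_all
  · exact sup_le (le_iSup_of_le 0 (by simp)) (le_iSup_of_le 1 (by simp))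

theorem maximum_span_property_equiv {V : Type*} [AddCommGroup V] [Module ℂ V]
    [FiniteDimensional ℂ V]
    (n : ℕ) (hn : Module.finrank ℂ V = n)
    (E F G : ℕ → Submodule ℂ V)
    (hEmono : Monotone E) (hFmono : Monotone F) (hGmono : Monotone G)
    (hEdim : ∀ a ≤ n, Module.finrank ℂ (E a) = a)
    (hFdim : ∀ a ≤ n, Module.finrank ℂ (F a) = a)
    (hGdim : ∀ a ≤ n, Module.finrank ℂ (G a) = a) :
    ((∀ a b c, a + b + c = n →
        iSupIndep ![E a, F b, G c] ∧ E a ⊔ F b ⊔ G c = ⊤) ↔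
      (∀ a b c, a ≤ n → b ≤ n → c ≤ n →
        Module.finrank ℂ ↥(E a ⊔ F b ⊔ G c) = min (a + b + c) n)) := by
  constructor
  · intro h a b c ha hb hc
    rcases le_or_gt (a + b + c) n with hle | hlt
    · set a' := n - b - c with ha'def
      have haa' : a ≤ a' := by omega
      have hsum : a' + b + c = n := by omega
      obtain ⟨hind, -⟩ := h a' b c hsum
      have h0 := hind (0 : Fin 3)
      have h1 := hind (1 : Fin 3)
      obtain ⟨e0, e1, e2⟩ := fin3_sup_ne (E a') (F b) (G c)
      rw [e0] at h0
      rw [e1] at h1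
      simp only [Matrix.cons_val_zero, Matrix.cons_val_one, Matrix.head_cons] at h0 h1
      have hFG : Disjoint (F b) (G c) := h1.mono_right le_sup_right
      have hE : Disjoint (E a) (F b ⊔ G c) := h0.mono_left (hEmono haa')
      have d1 : finrank ℂ ↥(F b ⊔ G c) = b + c := by
        have hh := Submodule.finrank_sup_add_finrank_inf_eq (F b) (G c)
        rw [hFG.eq_bot, hFdim b hb, hGdim c hc] at hh
        simp only [finrank_bot, add_zero] at hh
        omega
      have d2 : finrank ℂ ↥(E a ⊔ (F b ⊔ G c)) = a + (b + c) := by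
        have hh := Submodule.finrank_sup_add_finrank_inf_eq (E a) (F b ⊔ G c)
        rw [hE.eq_bot, hEdim a ha, d1] at hh
        simp only [finrank_bot, add_zero] at hh
        omega
      rw [sup_assoc, d2]
      omega
    · set b' := min b (n - a) with hb'def
      set c' := n - a - b' with hc'def
      have hsum : a + b' + c' = n := by omega
      obtain ⟨-, htop⟩ := h a b' c' hsum
      have : E a ⊔ F b ⊔ G c = ⊤ := by
        rw [eq_top_iff, ← htop]
        exact sup_le_sup (sup_le_sup le_rfl (hFmono (min_le_left _ _)))
          (hGmono (by omega))
      rw [this, finrank_top, hn]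
      omega
  · intro h a b c habc
    have ha : a ≤ n := by omega
    have hb : b ≤ n := by omega
    have hc : c ≤ n := by omega
    have hE0 : E 0 = ⊥ := Submodule.finrank_eq_zero.mp (hEdim 0 (by omega))
    have hF0 : F 0 = ⊥ := Submodule.finrank_eq_zero.mp (hFdim 0 (by omega))
    have hG0 : G 0 = ⊥ := Submodule.finrank_eq_zero.mp (hGdim 0 (by omega))
    have dFG : finrank ℂ ↥(F b ⊔ G c) = b + c := by
      have := h 0 b c (by omega) hb hc
      rw [hE0, bot_sup_eq] at this
      omega
    have dEG : finrank ℂ ↥(E a ⊔ G c) = a + c := by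
      have := h a 0 c ha (by omega) hc
      rw [hF0, sup_bot_eq] at this
      omega
    have dEF : finrank ℂ ↥(E a ⊔ F b) = a + b := by
      have := h a b 0 ha hb (by omega)
      rw [hG0, sup_bot_eq] at this
      omega
    have dtot : finrank ℂ ↥(E a ⊔ F b ⊔ G c) = n := by
      rw [h a b c ha hb hc]; omega
    have htop : E a ⊔ F b ⊔ G c = ⊤ := by
      apply Submodule.eq_top_of_finrank_eq
      rw [dtot, hn]
    have disj : ∀ (S T : Submodule ℂ V), finrank ℂ ↥(S ⊔ T) = finrank ℂ ↥S + finrank ℂ ↥T →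
        Disjoint S T := by
      intro S T hST
      have hh := Submodule.finrank_sup_add_finrank_inf_eq S T
      rw [hST] at hh
      rw [disjoint_iff]
      exact Submodule.finrank_eq_zero.mp (by omega)
    refine ⟨?_, htop⟩
    intro i
    obtain ⟨e0, e1, e2⟩ := fin3_sup_ne (E a) (F b) (G c)
    fin_cases i
    · show Disjoint (![E a, F b, G c] 0) (⨆ j, ⨆ _ : j ≠ (0 : Fin 3), ![E a, F b, G c] j)
      rw [e0]
      simp only [Matrix.cons_val_zero]
      apply disj
      rw [← sup_assoc, dtot, hEdim a ha, dFG]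
      omega
    · show Disjoint (![E a, F b, G c] 1) (⨆ j, ⨆ _ : j ≠ (1 : Fin 3), ![E a, F b, G c] j)
      rw [e1]
      simp only [Matrix.cons_val_one, Matrix.head_cons, Matrix.cons_val_zero]
      apply disj
      rw [sup_comm (F b), sup_assoc, sup_comm (G c), ← sup_assoc, dtot, hFdim b hb, dEG]
      omega
    · show Disjoint (![E a, F b, G c] 2) (⨆ j, ⨆ _ : j ≠ (2 : Fin 3), ![E a, F b, G c] j)
      rw [e2]
      simp only [Matrix.cons_val_two, Matrix.tail_cons, Matrix.head_cons]
      apply disj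
      rw [sup_comm (G c), dtot, hGdim c hc, dEF]
      omega
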